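/- For every SKS derivation from α to β, there exist formulae β′ and γ′ and SKS derivations: from α to β′ using only the rules ai↓, aw↑, ac↑ (and =), from β′ to γ′ using only the rules s, m (and =), and from γ′ to β using only the rules ai↑, aw↓, ac↓ (and =); that is, every SKS derivation can be decomposed into an up-fragment phase, a linear phase, and a down-fragment phase with the same overall premiss and conclusion. -/

import Mathlib

set_option linter.unusedVariables false

namespace AF

/-! ### Formulae of system SKS.

Atoms are pairs `(n, b)`; the involution `ā` flips the Boolean, so it is
fixed-point free. -/

inductive Formula : Type
  | tt : Formula
  | ff : Formula
  | atom : ℕ → Bool → Formula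
  | or : Formula → Formula → Formula
  | and : Formula → Formula → Formula
  deriving DecidableEq

namespace Formula

/-- Subformula at a position (`false` = left child, `true` = right child). -/
def sub : Formula → List Bool → Option Formula
  | φ, [] => some φ
  | .or α _, false :: p => sub α p
  | .or _ β, true :: p => sub β p
  | .and α _, false :: p => sub α p
  | .and _ β, true :: p => sub β p
  | _, _ :: _ => none

/-- Replace the subformula at a position. -/
def repl : Formula → List Bool → Formula → Formula
  | _, [], ψ => ψ
  | .or α β, false :: p, ψ => .or (repl α p ψ) β
  | .or α β, true :: p, ψ => .or α (repl β p ψ)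
  | .and α β, false :: p, ψ => .and (repl α p ψ) β
  | .and α β, true :: p, ψ => .and α (repl β p ψ)
  | φ, _ :: _, _ => φ

/-- `p` is an atom occurrence of `φ`. -/
def IsOcc (φ : Formula) (p : List Bool) : Prop :=
  ∃ n b, φ.sub p = some (.atom n b)

end Formula

/-! ### Inference rules.

The rule `=` of SKS replaces a formula by an equivalent one under
commutativity, associativity and the unit equations; each single instance of
`=` applies one equation (in either direction), so we list the equations as
individual rule names, all marked as being instances of `=` via `isEq`. -/

inductive RuleName : Type
  | aiDown | aiUp | awDown | awUp | acDown | acUp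
  | s | m
  | eqOrComm | eqAndComm
  | eqOrAssocL | eqOrAssocR | eqAndAssocL | eqAndAssocR
  | eqOrUnitDel | eqOrUnitAdd | eqAndUnitDel | eqAndUnitAdd
  | eqTTDel | eqTTAdd | eqFFDel | eqFFAdd
  deriving DecidableEq

namespace RuleName

/-- The atomic structural rules. -/
def isStructural : RuleName → Bool
  | .aiDown | .aiUp | .awDown | .awUp | .acDown | .acUp => true
  | _ => false

/-- The rule names that are instances of the rule `=`. -/
def isEq : RuleName → Bool
  | .aiDown | .aiUp | .awDown | .awUp | .acDown | .acUp | .s | .m => false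
  | _ => true

end RuleName

/-- Rule instances (redex ⟹ contractum). -/
inductive RuleInstance : RuleName → Formula → Formula → Prop
  | aiDown (n : ℕ) (b : Bool) :
      RuleInstance .aiDown .tt (.or (.atom n b) (.atom n (!b)))
  | aiUp (n : ℕ) (b : Bool) :
      RuleInstance .aiUp (.and (.atom n b) (.atom n (!b))) .ff
  | awDown (n : ℕ) (b : Bool) : RuleInstance .awDown .ff (.atom n b)
  | awUp (n : ℕ) (b : Bool) : RuleInstance .awUp (.atom n b) .tt
  | acDown (n : ℕ) (b : Bool) :
      RuleInstance .acDown (.or (.atom n b) (.atom n b)) (.atom n b)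
  | acUp (n : ℕ) (b : Bool) :
      RuleInstance .acUp (.atom n b) (.and (.atom n b) (.atom n b))
  | s (α β γ : Formula) :
      RuleInstance .s (.and α (.or β γ)) (.or (.and α β) γ)
  | m (α β γ δ : Formula) :
      RuleInstance .m (.or (.and α β) (.and γ δ)) (.and (.or α γ) (.or β δ))
  | eqOrComm (α β : Formula) : RuleInstance .eqOrComm (.or α β) (.or β α)
  | eqAndComm (α β : Formula) : RuleInstance .eqAndComm (.and α β) (.and β α)
  | eqOrAssocL (α β γ : Formula) :
      RuleInstance .eqOrAssocL (.or (.or α β) γ) (.or α (.or β γ))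
  | eqOrAssocR (α β γ : Formula) :
      RuleInstance .eqOrAssocR (.or α (.or β γ)) (.or (.or α β) γ)
  | eqAndAssocL (α β γ : Formula) :
      RuleInstance .eqAndAssocL (.and (.and α β) γ) (.and α (.and β γ))
  | eqAndAssocR (α β γ : Formula) :
      RuleInstance .eqAndAssocR (.and α (.and β γ)) (.and (.and α β) γ)
  | eqOrUnitDel (α : Formula) : RuleInstance .eqOrUnitDel (.or α .ff) α
  | eqOrUnitAdd (α : Formula) : RuleInstance .eqOrUnitAdd α (.or α .ff)
  | eqAndUnitDel (α : Formula) : RuleInstance .eqAndUnitDel (.and α .tt) α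
  | eqAndUnitAdd (α : Formula) : RuleInstance .eqAndUnitAdd α (.and α .tt)
  | eqTTDel : RuleInstance .eqTTDel (.or .tt .tt) .tt
  | eqTTAdd : RuleInstance .eqTTAdd .tt (.or .tt .tt)
  | eqFFDel : RuleInstance .eqFFDel (.and .ff .ff) .ff
  | eqFFAdd : RuleInstance .eqFFAdd .ff (.and .ff .ff)

/-- One (deep) inference step applying rule `r` at position `q`. -/
def StepAt (r : RuleName) (q : List Bool) (φ ψ : Formula) : Prop :=
  ∃ γ δ, φ.sub q = some γ ∧ RuleInstance r γ δ ∧ ψ = φ.repl q δ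

/-- One inference step using a rule from the set `S`. -/
def Step (S : Set RuleName) (φ ψ : Formula) : Prop :=
  ∃ r ∈ S, ∃ q, StepAt r q φ ψ

/-- There is a derivation from `φ` to `ψ` using only rules from `S`. -/
def Derives (S : Set RuleName) : Formula → Formula → Prop :=
  Relation.ReflTransGen (Step S)

/-! ### Derivations as explicit data (for the theory of atomic flows). -/

/-- A derivation: a premiss and a chain of steps, each recorded by its rule
name, the position of the redex, and the resulting formula. -/
structure Deriv : Type where
  prem : Formula
  steps : List (RuleName × List Bool × Formula)

namespace Deriv

/-- The `i`-th step datum. -/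
def stepAt (Φ : Deriv) (i : ℕ) : RuleName × List Bool × Formula :=
  Φ.steps.getD i (RuleName.s, ([] : List Bool), Formula.tt)

/-- The `i`-th formula of the derivation (`0` is the premiss). -/
def fml (Φ : Deriv) (i : ℕ) : Formula :=
  (Φ.prem :: Φ.steps.map (fun t => t.2.2)).getD i Φ.prem

/-- Number of formulae in the derivation. -/
def nf (Φ : Deriv) : ℕ := Φ.steps.length + 1

/-- The conclusion of the derivation. -/
def concl (Φ : Deriv) : Formula := Φ.fml Φ.steps.length

/-- The derivation is well formed: every recorded step is a correct
inference step of SKS. -/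
def WF (Φ : Deriv) : Prop :=
  ∀ i, i < Φ.steps.length →
    StepAt (Φ.stepAt i).1 (Φ.stepAt i).2.1 (Φ.fml i) (Φ.fml (i + 1))

end Deriv

/-! ### Atomic flows. -/

inductive FlowLabel : Type
  | aiDown | aiUp | awDown | awUp | acDown | acUp
  deriving DecidableEq

/-- Required (number of lower edges, number of upper edges) of a vertex. -/
def labDeg : FlowLabel → ℕ × ℕ
  | .aiDown => (2, 0)
  | .aiUp => (0, 2)
  | .awDown => (1, 0)
  | .awUp => (0, 1)
  | .acDown => (1, 2)
  | .acUp => (2, 1)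

/-- The data of an atomic flow: vertices, edges, labels, and the two
endpoint maps.  `up e = none` means the upper endpoint is `⊤`, and
`lo e = none` means the lower endpoint is `⊥`. -/
structure PreFlow : Type where
  V : Finset ℕ
  E : Finset ℕ
  η : ℕ → FlowLabel
  up : ℕ → Option ℕ
  lo : ℕ → Option ℕ

namespace PreFlow

/-- Lower edges of a vertex. -/
def Ledges (F : PreFlow) (v : ℕ) : Finset ℕ :=
  F.E.filter (fun e => F.up e = some v)

/-- Upper edges of a vertex. -/
def Uedges (F : PreFlow) (v : ℕ) : Finset ℕ :=
  F.E.filter (fun e => F.lo e = some v)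

/-- All edges of a vertex. -/
def edges (F : PreFlow) (v : ℕ) : Finset ℕ := F.Ledges v ∪ F.Uedges v

def degOK (F : PreFlow) : Prop :=
  ∀ v ∈ F.V, (F.Ledges v).card = (labDeg (F.η v)).1 ∧
    (F.Uedges v).card = (labDeg (F.η v)).2

def endpointsOK (F : PreFlow) : Prop :=
  ∀ e ∈ F.E, (∀ v, F.up e = some v → v ∈ F.V) ∧
    (∀ v, F.lo e = some v → v ∈ F.V)

/-- No cyclic sequence of edges `ε₁, …, ε_h` with
`up (ε_i) = lo (ε_(i+1 mod h))`. -/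
def Acyclic (F : PreFlow) : Prop :=
  ¬ ∃ (h : ℕ) (ε : Fin (h + 1) → ℕ), (∀ i, ε i ∈ F.E) ∧
      ∀ i : Fin (h + 1), (F.up (ε i)).isSome ∧ F.up (ε i) = F.lo (ε (i + 1))

/-- `π` is a polarity assignment (`false` = `−`, `true` = `+`). -/
def PolarityOK (F : PreFlow) (π : ℕ → Bool) : Prop :=
  ∀ v ∈ F.V,
    ((F.η v = .acDown ∨ F.η v = .acUp) →
      ∀ e₁ ∈ F.edges v, ∀ e₂ ∈ F.edges v, π e₁ = π e₂) ∧
    ((F.η v = .aiDown ∨ F.η v = .aiUp) →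
      ∃ e₁ ∈ F.edges v, ∃ e₂ ∈ F.edges v, π e₁ ≠ π e₂)

/-- `F` is an atomic flow. -/
def IsFlow (F : PreFlow) : Prop :=
  F.degOK ∧ F.endpointsOK ∧ F.Acyclic ∧ ∃ π, F.PolarityOK π

end PreFlow

/-! ### Paths, ai-paths, cycles. -/

/-- An endpoint of a path: a vertex, or `⊤`, or `⊥`. -/
inductive VPt : Type
  | ver : ℕ → VPt
  | top : VPt
  | bot : VPt
  deriving DecidableEq

/-- The upper endpoint of edge `e` is `ν`. -/
def srcOK (F : PreFlow) (ν : VPt) (e : ℕ) : Prop :=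
  match ν with
  | .ver v => F.up e = some v
  | .top => F.up e = none
  | .bot => False

/-- The lower endpoint of edge `e` is `ν`. -/
def tgtOK (F : PreFlow) (ν : VPt) (e : ℕ) : Prop :=
  match ν with
  | .ver v => F.lo e = some v
  | .bot => F.lo e = none
  | .top => False

/-- A downward path from `ν` to `ν'` (a nonempty sequence of edges, each
hanging from the lower endpoint of the previous one). -/
def IsDownPath (F : PreFlow) (ν ν' : VPt) (l : List ℕ) : Prop :=
  l ≠ [] ∧ (∀ e ∈ l, e ∈ F.E) ∧
  (∀ i, i + 1 < l.length →
    ∃ v ∈ F.V, F.lo (l.getD i 0) = some v ∧ F.up (l.getD (i + 1) 0) = some v) ∧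
  srcOK F ν (l.getD 0 0) ∧ tgtOK F ν' (l.getD (l.length - 1) 0)

/-- A path from `ν` to `ν'`: a downward path, or the reverse of a
downward path from `ν'` to `ν`. -/
def IsPath (F : PreFlow) (ν ν' : VPt) (l : List ℕ) : Prop :=
  IsDownPath F ν ν' l ∨ IsDownPath F ν' ν l.reverse

/-- ai-paths: paths, closed under concatenation (in distinct edges) at
interaction and cointeraction vertices. -/
inductive AIPath (F : PreFlow) : VPt → VPt → List ℕ → Prop
  | single {ν ν' : VPt} {l : List ℕ} : IsPath F ν ν' l → AIPath F ν ν' l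
  | join {ν ν' : VPt} {v : ℕ} {l₁ l₂ : List ℕ} {e e' : ℕ} :
      v ∈ F.V → (F.η v = .aiDown ∨ F.η v = .aiUp) →
      AIPath F ν (.ver v) (l₁ ++ [e]) →
      AIPath F (.ver v) ν' (e' :: l₂) →
      e ≠ e' →
      AIPath F ν ν' (l₁ ++ [e] ++ e' :: l₂)

/-- The flow contains an ai-cycle: an ai-path from a vertex to itself in
which no edge appears twice. -/
def HasAICycle (F : PreFlow) : Prop :=
  ∃ v l, v ∈ F.V ∧ AIPath F (.ver v) (.ver v) l ∧ l.Nodup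

def CycleFree (F : PreFlow) : Prop := ¬ HasAICycle F

/-- An ai-connection: a path from an interaction vertex to a cointeraction
vertex or vice versa. -/
def IsConnection (F : PreFlow) (l : List ℕ) : Prop :=
  ∃ v v', v ∈ F.V ∧ v' ∈ F.V ∧
    ((F.η v = .aiDown ∧ F.η v' = .aiUp) ∨
     (F.η v = .aiUp ∧ F.η v' = .aiDown)) ∧
    IsPath F (.ver v) (.ver v') l

/-- A simple edge: an ai-connection consisting of a single edge. -/
def SimpleEdge (F : PreFlow) (e : ℕ) : Prop := IsConnection F [e]

/-- A clean path: an ai-path all of whose ai-connections are simple edges. -/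
def IsCleanPath (F : PreFlow) (ν ν' : VPt) (l : List ℕ) : Prop :=
  AIPath F ν ν' l ∧
  ∀ l₁ l₂ l₃, l = l₁ ++ l₂ ++ l₃ → IsConnection F l₂ → l₂.length = 1

/-! ### Local flow reduction rules. -/

open PreFlow

/-- Rule `w↓-c↓`: a weakening feeding a contraction is erased, merging the
contraction's other two edges. -/
def RedWdCd (A B : PreFlow) : Prop :=
  ∃ v₁ v₂ e e₂ e₃,
    v₁ ∈ A.V ∧ v₂ ∈ A.V ∧ v₁ ≠ v₂ ∧
    A.η v₁ = .awDown ∧ A.η v₂ = .acDown ∧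
    e ∈ A.E ∧ e₂ ∈ A.E ∧ e₃ ∈ A.E ∧ e ≠ e₂ ∧ e ≠ e₃ ∧ e₂ ≠ e₃ ∧
    A.up e = some v₁ ∧ A.lo e = some v₂ ∧
    A.lo e₂ = some v₂ ∧ A.up e₃ = some v₂ ∧
    B.V = (A.V.erase v₁).erase v₂ ∧
    B.E = (A.E.erase e).erase e₃ ∧
    B.η = A.η ∧ B.up = A.up ∧
    B.lo = Function.update A.lo e₂ (A.lo e₃)

/-- Rule `c↑-w↑` (dual of `w↓-c↓`). -/
def RedCuWu (A B : PreFlow) : Prop :=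
  ∃ v₁ v₂ e e₂ e₃,
    v₁ ∈ A.V ∧ v₂ ∈ A.V ∧ v₁ ≠ v₂ ∧
    A.η v₁ = .awUp ∧ A.η v₂ = .acUp ∧
    e ∈ A.E ∧ e₂ ∈ A.E ∧ e₃ ∈ A.E ∧ e ≠ e₂ ∧ e ≠ e₃ ∧ e₂ ≠ e₃ ∧
    A.lo e = some v₁ ∧ A.up e = some v₂ ∧
    A.up e₂ = some v₂ ∧ A.lo e₃ = some v₂ ∧
    B.V = (A.V.erase v₁).erase v₂ ∧
    B.E = (A.E.erase e).erase e₃ ∧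
    B.η = A.η ∧ B.lo = A.lo ∧
    B.up = Function.update A.up e₂ (A.up e₃)

/-- Rule `w↓-i↑`: a weakening feeding a cointeraction is replaced by a
coweakening on the other cointeraction edge. -/
def RedWdIu (A B : PreFlow) : Prop :=
  ∃ v₁ v₂ e e₂,
    v₁ ∈ A.V ∧ v₂ ∈ A.V ∧ v₁ ≠ v₂ ∧
    A.η v₁ = .awDown ∧ A.η v₂ = .aiUp ∧
    e ∈ A.E ∧ e₂ ∈ A.E ∧ e ≠ e₂ ∧
    A.up e = some v₁ ∧ A.lo e = some v₂ ∧ A.lo e₂ = some v₂ ∧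
    B.V = A.V.erase v₁ ∧ B.E = A.E.erase e ∧
    B.η = Function.update A.η v₂ .awUp ∧
    B.up = A.up ∧ B.lo = A.lo

/-- Rule `i↓-w↑` (dual of `w↓-i↑`). -/
def RedIdWu (A B : PreFlow) : Prop :=
  ∃ v₁ v₂ e e₂,
    v₁ ∈ A.V ∧ v₂ ∈ A.V ∧ v₁ ≠ v₂ ∧
    A.η v₁ = .awUp ∧ A.η v₂ = .aiDown ∧
    e ∈ A.E ∧ e₂ ∈ A.E ∧ e ≠ e₂ ∧
    A.lo e = some v₁ ∧ A.up e = some v₂ ∧ A.up e₂ = some v₂ ∧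
    B.V = A.V.erase v₁ ∧ B.E = A.E.erase e ∧
    B.η = Function.update A.η v₂ .awDown ∧
    B.up = A.up ∧ B.lo = A.lo

/-- Rule `w↓-w↑`: a weakening joined to a coweakening is erased. -/
def RedWdWu (A B : PreFlow) : Prop :=
  ∃ v₁ v₂ e,
    v₁ ∈ A.V ∧ v₂ ∈ A.V ∧ v₁ ≠ v₂ ∧
    A.η v₁ = .awDown ∧ A.η v₂ = .awUp ∧
    e ∈ A.E ∧ A.up e = some v₁ ∧ A.lo e = some v₂ ∧
    B.V = (A.V.erase v₁).erase v₂ ∧ B.E = A.E.erase e ∧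
    B.η = A.η ∧ B.up = A.up ∧ B.lo = A.lo

/-- Rule `w↓-c↑`: a weakening feeding a cocontraction is replaced by two
weakenings. -/
def RedWdCu (A B : PreFlow) : Prop :=
  ∃ v₁ v₂ e e₁ e₂,
    v₁ ∈ A.V ∧ v₂ ∈ A.V ∧ v₁ ≠ v₂ ∧
    A.η v₁ = .awDown ∧ A.η v₂ = .acUp ∧
    e ∈ A.E ∧ e₁ ∈ A.E ∧ e₂ ∈ A.E ∧ e ≠ e₁ ∧ e ≠ e₂ ∧ e₁ ≠ e₂ ∧
    A.up e = some v₁ ∧ A.lo e = some v₂ ∧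
    A.up e₁ = some v₂ ∧ A.up e₂ = some v₂ ∧
    B.V = A.V ∧ B.E = A.E.erase e ∧
    B.η = Function.update A.η v₂ .awDown ∧
    B.up = Function.update A.up e₁ (some v₁) ∧
    B.lo = A.lo

/-- Rule `c↓-w↑` (dual of `w↓-c↑`). -/
def RedCdWu (A B : PreFlow) : Prop :=
  ∃ v₁ v₂ e e₁ e₂,
    v₁ ∈ A.V ∧ v₂ ∈ A.V ∧ v₁ ≠ v₂ ∧
    A.η v₁ = .awUp ∧ A.η v₂ = .acDown ∧
    e ∈ A.E ∧ e₁ ∈ A.E ∧ e₂ ∈ A.E ∧ e ≠ e₁ ∧ e ≠ e₂ ∧ e₁ ≠ e₂ ∧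
    A.lo e = some v₁ ∧ A.up e = some v₂ ∧
    A.lo e₁ = some v₂ ∧ A.lo e₂ = some v₂ ∧
    B.V = A.V ∧ B.E = A.E.erase e ∧
    B.η = Function.update A.η v₂ .awUp ∧
    B.lo = Function.update A.lo e₁ (some v₁) ∧
    B.up = A.up

/-- Rule `c↓-i↑`: a contraction whose output edge enters a cointeraction is
replaced by a cocontraction on the other cointeraction edge followed by two
cointeractions. -/
def RedCdIu (A B : PreFlow) : Prop :=
  ∃ v₁ v₂ v₃ e e₁ e₂ e₃ g₁ g₂,
    v₁ ∈ A.V ∧ v₂ ∈ A.V ∧ v₁ ≠ v₂ ∧ v₃ ∉ A.V ∧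
    A.η v₁ = .acDown ∧ A.η v₂ = .aiUp ∧
    e ∈ A.E ∧ e₁ ∈ A.E ∧ e₂ ∈ A.E ∧ e₃ ∈ A.E ∧
    e ≠ e₁ ∧ e ≠ e₂ ∧ e ≠ e₃ ∧ e₁ ≠ e₂ ∧ e₁ ≠ e₃ ∧ e₂ ≠ e₃ ∧
    g₁ ∉ A.E ∧ g₂ ∉ A.E ∧ g₁ ≠ g₂ ∧
    A.lo e₁ = some v₁ ∧ A.lo e₂ = some v₁ ∧
    A.up e = some v₁ ∧ A.lo e = some v₂ ∧ A.lo e₃ = some v₂ ∧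
    B.V = insert v₃ A.V ∧
    B.E = insert g₁ (insert g₂ (A.E.erase e)) ∧
    B.η = Function.update (Function.update A.η v₁ .acUp) v₃ .aiUp ∧
    B.up = Function.update (Function.update A.up g₁ (some v₁)) g₂ (some v₁) ∧
    B.lo = Function.update (Function.update (Function.update
      (Function.update (Function.update A.lo e₁ (some v₂)) e₂ (some v₃))
        e₃ (some v₁)) g₁ (some v₂)) g₂ (some v₃)

/-- Rule `i↓-c↑` (dual of `c↓-i↑`). -/
def RedIdCu (A B : PreFlow) : Prop :=
  ∃ v₁ v₂ v₃ e e₁ e₂ e₃ g₁ g₂,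
    v₁ ∈ A.V ∧ v₂ ∈ A.V ∧ v₁ ≠ v₂ ∧ v₃ ∉ A.V ∧
    A.η v₁ = .acUp ∧ A.η v₂ = .aiDown ∧
    e ∈ A.E ∧ e₁ ∈ A.E ∧ e₂ ∈ A.E ∧ e₃ ∈ A.E ∧
    e ≠ e₁ ∧ e ≠ e₂ ∧ e ≠ e₃ ∧ e₁ ≠ e₂ ∧ e₁ ≠ e₃ ∧ e₂ ≠ e₃ ∧
    g₁ ∉ A.E ∧ g₂ ∉ A.E ∧ g₁ ≠ g₂ ∧
    A.up e₁ = some v₁ ∧ A.up e₂ = some v₁ ∧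
    A.lo e = some v₁ ∧ A.up e = some v₂ ∧ A.up e₃ = some v₂ ∧
    B.V = insert v₃ A.V ∧
    B.E = insert g₁ (insert g₂ (A.E.erase e)) ∧
    B.η = Function.update (Function.update A.η v₁ .acDown) v₃ .aiDown ∧
    B.lo = Function.update (Function.update A.lo g₁ (some v₁)) g₂ (some v₁) ∧
    B.up = Function.update (Function.update (Function.update
      (Function.update (Function.update A.up e₁ (some v₂)) e₂ (some v₃))
        e₃ (some v₁)) g₁ (some v₂)) g₂ (some v₃)

/-- Rule `c↓-c↑`: a contraction whose output enters a cocontraction is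
replaced by two cocontractions above two contractions, crosswise connected. -/
def RedCdCu (A B : PreFlow) : Prop :=
  ∃ v₁ v₂ v₃ v₄ e e₁ e₂ e₃ e₄ g₁₁ g₁₂ g₂₁ g₂₂,
    v₁ ∈ A.V ∧ v₂ ∈ A.V ∧ v₁ ≠ v₂ ∧
    v₃ ∉ A.V ∧ v₄ ∉ A.V ∧ v₃ ≠ v₄ ∧
    A.η v₁ = .acDown ∧ A.η v₂ = .acUp ∧
    e ∈ A.E ∧ e₁ ∈ A.E ∧ e₂ ∈ A.E ∧ e₃ ∈ A.E ∧ e₄ ∈ A.E ∧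
    e ≠ e₁ ∧ e ≠ e₂ ∧ e ≠ e₃ ∧ e ≠ e₄ ∧
    e₁ ≠ e₂ ∧ e₁ ≠ e₃ ∧ e₁ ≠ e₄ ∧ e₂ ≠ e₃ ∧ e₂ ≠ e₄ ∧ e₃ ≠ e₄ ∧
    g₁₁ ∉ A.E ∧ g₁₂ ∉ A.E ∧ g₂₁ ∉ A.E ∧ g₂₂ ∉ A.E ∧
    g₁₁ ≠ g₁₂ ∧ g₁₁ ≠ g₂₁ ∧ g₁₁ ≠ g₂₂ ∧ g₁₂ ≠ g₂₁ ∧ g₁₂ ≠ g₂₂ ∧ g₂₁ ≠ g₂₂ ∧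
    A.lo e₁ = some v₁ ∧ A.lo e₂ = some v₁ ∧ A.up e = some v₁ ∧
    A.lo e = some v₂ ∧ A.up e₃ = some v₂ ∧ A.up e₄ = some v₂ ∧
    B.V = insert v₃ (insert v₄ A.V) ∧
    B.E = insert g₁₁ (insert g₁₂ (insert g₂₁ (insert g₂₂ (A.E.erase e)))) ∧
    B.η = Function.update (Function.update (Function.update
      (Function.update A.η v₁ .acUp) v₂ .acUp) v₃ .acDown) v₄ .acDown ∧
    B.up = Function.update (Function.update (Function.update
      (Function.update (Function.update (Function.update A.up
        e₃ (some v₃)) e₄ (some v₄)) g₁₁ (some v₁)) g₁₂ (some v₁))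
          g₂₁ (some v₂)) g₂₂ (some v₂) ∧
    B.lo = Function.update (Function.update (Function.update
      (Function.update (Function.update A.lo e₂ (some v₂)) g₁₁ (some v₃))
        g₁₂ (some v₄)) g₂₁ (some v₃)) g₂₂ (some v₄)

/-- One step of the flow rewriting system `w`. -/
def StepW (A B : PreFlow) : Prop :=
  RedWdCd A B ∨ RedCuWu A B ∨ RedWdIu A B ∨ RedIdWu A B ∨
  RedWdWu A B ∨ RedWdCu A B ∨ RedCdWu A B

/-- One step of the flow rewriting system `c`. -/
def StepC (A B : PreFlow) : Prop :=
  RedCdIu A B ∨ RedIdCu A B ∨ RedCdCu A B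

/-- `A` is normal for the flow rewriting system `w`. -/
def NormalW (A : PreFlow) : Prop := ¬ ∃ B, StepW A B

/-- `A` is normal for the flow rewriting system `c`. -/
def NormalC (A : PreFlow) : Prop := ¬ ∃ B, StepC A B

/-! ### Flow isomorphisms. -/

structure FlowIso (A B : PreFlow) : Type where
  vmap : ℕ → ℕ
  emap : ℕ → ℕ
  vbij : Set.BijOn vmap (A.V : Set ℕ) (B.V : Set ℕ)
  ebij : Set.BijOn emap (A.E : Set ℕ) (B.E : Set ℕ)
  lab : ∀ v ∈ A.V, B.η (vmap v) = A.η v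
  upc : ∀ e ∈ A.E, B.up (emap e) = (A.up e).map vmap
  loc : ∀ e ∈ A.E, B.lo (emap e) = (A.lo e).map vmap

/-! ### The global reduction `→se` (elimination of a simple edge). -/

/-- The flow obtained from `B` by eliminating the simple edge `e0` between
the interaction `vi` and the cointeraction `vc` (with `e2` the other lower
edge of `vi` and `e3` the other upper edge of `vc`): two copies (tags `0`,
hat, the lower one, and `1`, tilde, the upper one) of the remaining flow are
glued by identifying the hat copy of `e2` with the tilde copy of `e3`; a
weakening (vertex `(2,0)`) is placed above the tilde copy of `e2`, a
coweakening (vertex `(2,1)`) below the hat copy of `e3`; each upper edge `ε`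
of `B` gives a cocontraction (vertex `(3,ε)`, with a new upper edge `(3,ε)`)
joining the two copies of `ε`, and dually each lower edge `ε'` of `B` gives
a contraction (vertex `(4,ε')`, with a new lower edge `(4,ε')`). -/
def seFlow (B : PreFlow) (vi vc e0 e2 e3 : ℕ) : PreFlow :=
  { V := ((B.V.erase vi).erase vc).image (Nat.pair 0) ∪
         ((B.V.erase vi).erase vc).image (Nat.pair 1) ∪
         {Nat.pair 2 0, Nat.pair 2 1} ∪
         (B.E.filter (fun e => B.up e = none)).image (Nat.pair 3) ∪
         (B.E.filter (fun e => B.lo e = none)).image (Nat.pair 4),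
    E := (B.E.erase e0).image (Nat.pair 0) ∪
         (B.E.erase e0).image (fun e => if e = e3 then Nat.pair 0 e2 else Nat.pair 1 e) ∪
         (B.E.filter (fun e => B.up e = none)).image (Nat.pair 3) ∪
         (B.E.filter (fun e => B.lo e = none)).image (Nat.pair 4),
    η := fun x =>
      if (Nat.unpair x).1 = 2 then
        (if (Nat.unpair x).2 = 0 then FlowLabel.awDown else FlowLabel.awUp)
      else if (Nat.unpair x).1 = 3 then FlowLabel.acUp
      else if (Nat.unpair x).1 = 4 then FlowLabel.acDown
      else B.η (Nat.unpair x).2,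
    up := fun x =>
      let t := (Nat.unpair x).1
      let y := (Nat.unpair x).2
      if t = 0 then
        (if y = e2 then
          (match B.up e3 with
           | some v => some (Nat.pair 1 v)
           | none => some (Nat.pair 3 e3))
        else
          (match B.up y with
           | some v => some (Nat.pair 0 v)
           | none => some (Nat.pair 3 y)))
      else if t = 1 then
        (if y = e2 then some (Nat.pair 2 0)
        else
          (match B.up y with
           | some v => some (Nat.pair 1 v)
           | none => some (Nat.pair 3 y)))
      else if t = 3 then none
      else some (Nat.pair 4 y),
    lo := fun x =>
      let t := (Nat.unpair x).1
      let y := (Nat.unpair x).2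
      if t = 0 then
        (if y = e2 then
          (match B.lo e2 with
           | some v => some (Nat.pair 0 v)
           | none => some (Nat.pair 4 e2))
        else if y = e3 then some (Nat.pair 2 1)
        else
          (match B.lo y with
           | some v => some (Nat.pair 0 v)
           | none => some (Nat.pair 4 y)))
      else if t = 1 then
        (match B.lo y with
         | some v => some (Nat.pair 1 v)
         | none => some (Nat.pair 4 y))
      else if t = 3 then some (Nat.pair 3 y)
      else none }

/-- The reduction `→se`: elimination of a simple edge (up to flow
isomorphism). -/
def RedSE (B C : PreFlow) : Prop :=
  ∃ vi vc e0 e2 e3,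
    vi ∈ B.V ∧ vc ∈ B.V ∧ vi ≠ vc ∧
    B.η vi = .aiDown ∧ B.η vc = .aiUp ∧
    e0 ∈ B.E ∧ e2 ∈ B.E ∧ e3 ∈ B.E ∧
    e0 ≠ e2 ∧ e0 ≠ e3 ∧ e2 ≠ e3 ∧
    B.up e0 = some vi ∧ B.lo e0 = some vc ∧
    B.up e2 = some vi ∧ B.lo e3 = some vc ∧
    Nonempty (FlowIso C (seFlow B vi vc e0 e2 e3))

/-! ### The atomic flow associated with a derivation. -/

/-- Correspondence conditions for a linear rule applied at position `q`:
for each pair `(c₁, c₂)` in `cs`, occurrences at `q ++ c₁ ++ p` in the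
conclusion (formula `i+1`) are traced to occurrences at `q ++ c₂ ++ p` in
the premiss (formula `i`). -/
def corrCond (f : ℕ → List Bool → ℕ) (i : ℕ) (q : List Bool) (ψ : Formula)
    (cs : List (List Bool × List Bool)) : Prop :=
  ∀ c ∈ cs, ∀ p : List Bool, ψ.IsOcc (q ++ c.1 ++ p) →
    f (i + 1) (q ++ c.1 ++ p) = f i (q ++ c.2 ++ p)

/-- The tracing conditions for one inference step: occurrences in the
context are traced to the same edge, and the active occurrences of a
structural rule are related to the edges of the vertex `v` as prescribed by
its label, while the active occurrences of logical and `=` steps are traced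
to the same edges under the canonical correspondence. -/
def stepCond (A : PreFlow) (f : ℕ → List Bool → ℕ) (v : ℕ) (i : ℕ)
    (r : RuleName) (q : List Bool) (φ ψ : Formula) : Prop :=
  (∀ p, ¬ (q <+: p) → φ.IsOcc p → f (i + 1) p = f i p) ∧
  match r with
  | .aiDown =>
      A.η v = .aiDown ∧
      A.up (f (i + 1) (q ++ [false])) = some v ∧
      A.up (f (i + 1) (q ++ [true])) = some v ∧
      f (i + 1) (q ++ [false]) ≠ f (i + 1) (q ++ [true])
  | .aiUp =>
      A.η v = .aiUp ∧
      A.lo (f i (q ++ [false])) = some v ∧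
      A.lo (f i (q ++ [true])) = some v ∧
      f i (q ++ [false]) ≠ f i (q ++ [true])
  | .awDown => A.η v = .awDown ∧ A.up (f (i + 1) q) = some v
  | .awUp => A.η v = .awUp ∧ A.lo (f i q) = some v
  | .acDown =>
      A.η v = .acDown ∧
      A.lo (f i (q ++ [false])) = some v ∧
      A.lo (f i (q ++ [true])) = some v ∧
      A.up (f (i + 1) q) = some v ∧
      f i (q ++ [false]) ≠ f i (q ++ [true])
  | .acUp =>
      A.η v = .acUp ∧
      A.lo (f i q) = some v ∧
      A.up (f (i + 1) (q ++ [false])) = some v ∧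
      A.up (f (i + 1) (q ++ [true])) = some v ∧
      f (i + 1) (q ++ [false]) ≠ f (i + 1) (q ++ [true])
  | .s => corrCond f i q ψ
      [([false, false], [false]), ([false, true], [true, false]),
       ([true], [true, true])]
  | .m => corrCond f i q ψ
      [([false, false], [false, false]), ([true, false], [false, true]),
       ([false, true], [true, false]), ([true, true], [true, true])]
  | .eqOrComm => corrCond f i q ψ [([false], [true]), ([true], [false])]
  | .eqAndComm => corrCond f i q ψ [([false], [true]), ([true], [false])]
  | .eqOrAssocL => corrCond f i q ψ
      [([false], [false, false]), ([true, false], [false, true]),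
       ([true, true], [true])]
  | .eqOrAssocR => corrCond f i q ψ
      [([false, false], [false]), ([false, true], [true, false]),
       ([true], [true, true])]
  | .eqAndAssocL => corrCond f i q ψ
      [([false], [false, false]), ([true, false], [false, true]),
       ([true, true], [true])]
  | .eqAndAssocR => corrCond f i q ψ
      [([false, false], [false]), ([false, true], [true, false]),
       ([true], [true, true])]
  | .eqOrUnitDel => corrCond f i q ψ [([], [false])]
  | .eqOrUnitAdd => corrCond f i q ψ [([false], [])]
  | .eqAndUnitDel => corrCond f i q ψ [([], [false])]
  | .eqAndUnitAdd => corrCond f i q ψ [([false], [])]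
  | .eqTTDel => True
  | .eqTTAdd => True
  | .eqFFDel => True
  | .eqFFAdd => True

/-- `A` is the atomic flow associated with the derivation `Φ`, where `f`
maps each atom occurrence (formula index, position) of `Φ` to an edge of
`A`, and `g` assigns to each structural inference step its vertex. -/
def IsAssocFlow (Φ : Deriv) (A : PreFlow) (f : ℕ → List Bool → ℕ)
    (g : ℕ → ℕ) : Prop :=
  Φ.WF ∧ A.IsFlow ∧
  (∀ i p, i < Φ.nf → (Φ.fml i).IsOcc p → f i p ∈ A.E) ∧
  (∀ e ∈ A.E, ∃ i p, i < Φ.nf ∧ (Φ.fml i).IsOcc p ∧ f i p = e) ∧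
  (∀ i p p', i < Φ.nf → (Φ.fml i).IsOcc p → (Φ.fml i).IsOcc p' →
    f i p = f i p' → p = p') ∧
  (∀ p, (Φ.fml 0).IsOcc p → A.up (f 0 p) = none) ∧
  (∀ p, (Φ.fml Φ.steps.length).IsOcc p → A.lo (f Φ.steps.length p) = none) ∧
  (∀ i, i < Φ.steps.length → (Φ.stepAt i).1.isStructural = true → g i ∈ A.V) ∧
  (∀ v ∈ A.V, ∃ i, i < Φ.steps.length ∧
    (Φ.stepAt i).1.isStructural = true ∧ g i = v) ∧
  (∀ i j, i < Φ.steps.length → j < Φ.steps.length →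
    (Φ.stepAt i).1.isStructural = true → (Φ.stepAt j).1.isStructural = true →
    g i = g j → i = j) ∧
  (∀ i, i < Φ.steps.length →
    stepCond A f (g i) i (Φ.stepAt i).1 (Φ.stepAt i).2.1
      (Φ.fml i) (Φ.fml (i + 1)))

/-! ### Streamlining. -/

/-- No path from an interaction or weakening vertex to a cointeraction or
coweakening vertex. -/
def NoIWPath (A : PreFlow) : Prop :=
  ¬ ∃ v v' l, v ∈ A.V ∧ v' ∈ A.V ∧
      (A.η v = .aiDown ∨ A.η v = .awDown) ∧
      (A.η v' = .aiUp ∨ A.η v' = .awUp) ∧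
      IsPath A (.ver v) (.ver v') l

/-- `Φ` is a streamlined derivation. -/
def Streamlined (Φ : Deriv) : Prop :=
  ∃ A f g, IsAssocFlow Φ A f g ∧ NoIWPath A

/-- `Φ` is a super-streamlined derivation. -/
def SuperStreamlined (Φ : Deriv) : Prop :=
  ∃ A f g, IsAssocFlow Φ A f g ∧ NoIWPath A ∧ NormalW A

/-- `Φ` is a hyper-streamlined derivation. -/
def HyperStreamlined (Φ : Deriv) : Prop :=
  ∃ A f g, IsAssocFlow Φ A f g ∧ NoIWPath A ∧ NormalW A ∧ NormalC A

end AF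


namespace AF

/-! ### Auxiliary development for statement 19 -/

abbrev USet : Set RuleName := {r | r = RuleName.aiDown ∨ r = RuleName.awUp ∨
                   r = RuleName.acUp ∨ r.isEq = true}
abbrev MSet : Set RuleName := {r | r = RuleName.s ∨ r = RuleName.m ∨ r.isEq = true}
abbrev DSet : Set RuleName := {r | r = RuleName.aiUp ∨ r = RuleName.awDown ∨
                   r = RuleName.acDown ∨ r.isEq = true}

def EqClosed (S : Set RuleName) : Prop := ∀ r : RuleName, r.isEq = true → r ∈ S

lemma eqUSet : EqClosed USet := fun _ h => Or.inr (Or.inr (Or.inr h))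
lemma eqMSet : EqClosed MSet := fun _ h => Or.inr (Or.inr h)
lemma eqDSet : EqClosed DSet := fun _ h => Or.inr (Or.inr (Or.inr h))

lemma dRefl {S : Set RuleName} {φ : Formula} : Derives S φ φ := Relation.ReflTransGen.refl

lemma dTrans {S : Set RuleName} {φ ψ χ : Formula} :
    Derives S φ ψ → Derives S ψ χ → Derives S φ χ := Relation.ReflTransGen.trans

lemma sub_nil (γ : Formula) : Formula.sub γ [] = some γ := by cases γ <;> rfl
lemma repl_nil (γ δ : Formula) : Formula.repl γ [] δ = δ := by cases γ <;> rfl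

lemma stepRoot {S : Set RuleName} {r : RuleName} {γ δ : Formula}
    (hr : r ∈ S) (h : RuleInstance r γ δ) : Step S γ δ :=
  ⟨r, hr, [], γ, δ, sub_nil γ, h, (repl_nil γ δ).symm⟩

lemma dStep {S : Set RuleName} {r : RuleName} {γ δ : Formula}
    (hr : r ∈ S) (h : RuleInstance r γ δ) : Derives S γ δ :=
  Relation.ReflTransGen.single (stepRoot hr h)

lemma Step.orL {S : Set RuleName} {φ ψ χ : Formula} (h : Step S φ ψ) :
    Step S (.or φ χ) (.or ψ χ) := by
  obtain ⟨r, hr, q, γ, δ, h1, h2, h3⟩ := h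
  exact ⟨r, hr, false :: q, γ, δ, h1, h2, by simp [Formula.repl, h3]⟩

lemma Step.orR {S : Set RuleName} {φ ψ χ : Formula} (h : Step S φ ψ) :
    Step S (.or χ φ) (.or χ ψ) := by
  obtain ⟨r, hr, q, γ, δ, h1, h2, h3⟩ := h
  exact ⟨r, hr, true :: q, γ, δ, h1, h2, by simp [Formula.repl, h3]⟩

lemma Step.andL {S : Set RuleName} {φ ψ χ : Formula} (h : Step S φ ψ) :
    Step S (.and φ χ) (.and ψ χ) := by
  obtain ⟨r, hr, q, γ, δ, h1, h2, h3⟩ := h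
  exact ⟨r, hr, false :: q, γ, δ, h1, h2, by simp [Formula.repl, h3]⟩

lemma Step.andR {S : Set RuleName} {φ ψ χ : Formula} (h : Step S φ ψ) :
    Step S (.and χ φ) (.and χ ψ) := by
  obtain ⟨r, hr, q, γ, δ, h1, h2, h3⟩ := h
  exact ⟨r, hr, true :: q, γ, δ, h1, h2, by simp [Formula.repl, h3]⟩

lemma dOrL {S : Set RuleName} {φ ψ χ : Formula} (h : Derives S φ ψ) :
    Derives S (.or φ χ) (.or ψ χ) := by
  induction h with
  | refl => exact dRefl
  | tail _ hstep ih => exact ih.tail hstep.orL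

lemma dOrR {S : Set RuleName} {φ ψ χ : Formula} (h : Derives S φ ψ) :
    Derives S (.or χ φ) (.or χ ψ) := by
  induction h with
  | refl => exact dRefl
  | tail _ hstep ih => exact ih.tail hstep.orR

lemma dAndL {S : Set RuleName} {φ ψ χ : Formula} (h : Derives S φ ψ) :
    Derives S (.and φ χ) (.and ψ χ) := by
  induction h with
  | refl => exact dRefl
  | tail _ hstep ih => exact ih.tail hstep.andL

lemma dAndR {S : Set RuleName} {φ ψ χ : Formula} (h : Derives S φ ψ) :
    Derives S (.and χ φ) (.and χ ψ) := by
  induction h with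
  | refl => exact dRefl
  | tail _ hstep ih => exact ih.tail hstep.andR

lemma dOr2 {S : Set RuleName} {a a' b b' : Formula}
    (h1 : Derives S a a') (h2 : Derives S b b') : Derives S (.or a b) (.or a' b') :=
  dTrans (dOrL h1) (dOrR h2)

lemma dAnd2 {S : Set RuleName} {a a' b b' : Formula}
    (h1 : Derives S a a') (h2 : Derives S b b') : Derives S (.and a b) (.and a' b') :=
  dTrans (dAndL h1) (dAndR h2)

section EqToolkit

variable {S : Set RuleName}

lemma eOrComm (hE : EqClosed S) (a b : Formula) : Derives S (.or a b) (.or b a) :=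
  dStep (hE .eqOrComm rfl) (.eqOrComm a b)

lemma eAndComm (hE : EqClosed S) (a b : Formula) : Derives S (.and a b) (.and b a) :=
  dStep (hE .eqAndComm rfl) (.eqAndComm a b)

lemma eOrAssocL (hE : EqClosed S) (a b c : Formula) : Derives S (.or (.or a b) c) (.or a (.or b c)) :=
  dStep (hE .eqOrAssocL rfl) (.eqOrAssocL a b c)

lemma eOrAssocR (hE : EqClosed S) (a b c : Formula) : Derives S (.or a (.or b c)) (.or (.or a b) c) :=
  dStep (hE .eqOrAssocR rfl) (.eqOrAssocR a b c)

lemma eAndAssocL (hE : EqClosed S) (a b c : Formula) : Derives S (.and (.and a b) c) (.and a (.and b c)) :=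
  dStep (hE .eqAndAssocL rfl) (.eqAndAssocL a b c)

lemma eAndAssocR (hE : EqClosed S) (a b c : Formula) : Derives S (.and a (.and b c)) (.and (.and a b) c) :=
  dStep (hE .eqAndAssocR rfl) (.eqAndAssocR a b c)

lemma eOrUnitDel (hE : EqClosed S) (a : Formula) : Derives S (.or a .ff) a :=
  dStep (hE .eqOrUnitDel rfl) (.eqOrUnitDel a)

lemma eOrUnitAdd (hE : EqClosed S) (a : Formula) : Derives S a (.or a .ff) :=
  dStep (hE .eqOrUnitAdd rfl) (.eqOrUnitAdd a)

lemma eAndUnitDel (hE : EqClosed S) (a : Formula) : Derives S (.and a .tt) a :=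
  dStep (hE .eqAndUnitDel rfl) (.eqAndUnitDel a)

lemma eAndUnitAdd (hE : EqClosed S) (a : Formula) : Derives S a (.and a .tt) :=
  dStep (hE .eqAndUnitAdd rfl) (.eqAndUnitAdd a)

lemma eTTDel (hE : EqClosed S) : Derives S (.or .tt .tt) .tt := dStep (hE .eqTTDel rfl) .eqTTDel
lemma eTTAdd (hE : EqClosed S) : Derives S .tt (.or .tt .tt) := dStep (hE .eqTTAdd rfl) .eqTTAdd
lemma eFFDel (hE : EqClosed S) : Derives S (.and .ff .ff) .ff := dStep (hE .eqFFDel rfl) .eqFFDel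
lemma eFFAdd (hE : EqClosed S) : Derives S .ff (.and .ff .ff) := dStep (hE .eqFFAdd rfl) .eqFFAdd

/-- delete a unit `f` on the left of a disjunction -/
lemma eOrUnitDelL (hE : EqClosed S) (a : Formula) : Derives S (.or .ff a) a :=
  dTrans (eOrComm hE _ _) (eOrUnitDel hE a)

lemma eOrUnitAddL (hE : EqClosed S) (a : Formula) : Derives S a (.or .ff a) :=
  dTrans (eOrUnitAdd hE a) (eOrComm hE _ _)

lemma eAndUnitDelL (hE : EqClosed S) (a : Formula) : Derives S (.and .tt a) a :=
  dTrans (eAndComm hE _ _) (eAndUnitDel hE a)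

lemma eAndUnitAddL (hE : EqClosed S) (a : Formula) : Derives S a (.and .tt a) :=
  dTrans (eAndUnitAdd hE a) (eAndComm hE _ _)

/-- `[[a∨b]∨[c∨d]] ⟹ [[a∨c]∨[b∨d]]` by `=` steps. -/
lemma eOrInterchange (hE : EqClosed S) (a b c d : Formula) :
    Derives S (.or (.or a b) (.or c d)) (.or (.or a c) (.or b d)) := by
  refine dTrans (eOrAssocL hE a b (.or c d)) ?_
  refine dTrans (dOrR (dTrans (eOrAssocR hE b c d) (dOrL (eOrComm hE b c)))) ?_
  refine dTrans (dOrR (eOrAssocL hE c b d)) ?_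
  exact eOrAssocR hE a c (.or b d)

end EqToolkit

end AF

namespace AF

/-! ### Semantics -/

def evalF (σ : ℕ → Bool) : Formula → Bool
  | .tt => true
  | .ff => false
  | .atom n b => σ n == b
  | .or a b => evalF σ a || evalF σ b
  | .and a b => evalF σ a && evalF σ b

lemma ruleSound {r : RuleName} {γ δ : Formula} (h : RuleInstance r γ δ)
    (σ : ℕ → Bool) : evalF σ γ = true → evalF σ δ = true := by
  cases h <;>
    try (intro h1; simp only [evalF, Bool.or_eq_true, Bool.and_eq_true] at h1 ⊢; tauto)
  case aiDown n b => intro _; simp only [evalF]; cases σ n <;> cases b <;> rfl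
  case awUp n b => intro _; rfl
  case eqTTDel => intro _; rfl
  case aiUp n b =>
    intro h1
    simp only [evalF, Bool.and_eq_true] at h1
    exfalso; cases σ n <;> cases b <;> simp_all

lemma replMono {σ : ℕ → Bool} {γ δ : Formula} (himp : evalF σ γ = true → evalF σ δ = true) :
    ∀ (φ : Formula) (q : List Bool), φ.sub q = some γ →
      evalF σ φ = true → evalF σ (φ.repl q δ) = true := by
  intro φ
  induction φ with
  | tt => intro q hq; cases q with
      | nil => simp [Formula.sub] at hq; subst hq; simpa [repl_nil] using himp
      | cons b q => simp [Formula.sub] at hq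
  | ff => intro q hq; cases q with
      | nil => simp [Formula.sub] at hq; subst hq; simpa [repl_nil] using himp
      | cons b q => simp [Formula.sub] at hq
  | atom n c => intro q hq; cases q with
      | nil => simp [Formula.sub] at hq; subst hq; simpa [repl_nil] using himp
      | cons b q => simp [Formula.sub] at hq
  | or a b iha ihb =>
      intro q hq
      cases q with
      | nil =>
          simp [Formula.sub] at hq; subst hq; simpa [repl_nil] using himp
      | cons x q =>
          cases x with
          | false =>
              intro hev
              have : evalF σ a = true ∨ evalF σ b = true := by
                simpa [evalF, Bool.or_eq_true] using hev
              simp only [Formula.repl, evalF, Bool.or_eq_true]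
              rcases this with h1 | h1
              · exact Or.inl (iha q hq h1)
              · exact Or.inr h1
          | true =>
              intro hev
              have : evalF σ a = true ∨ evalF σ b = true := by
                simpa [evalF, Bool.or_eq_true] using hev
              simp only [Formula.repl, evalF, Bool.or_eq_true]
              rcases this with h1 | h1
              · exact Or.inl h1
              · exact Or.inr (ihb q hq h1)
  | and a b iha ihb =>
      intro q hq
      cases q with
      | nil =>
          simp [Formula.sub] at hq; subst hq; simpa [repl_nil] using himp
      | cons x q =>
          cases x with
          | false =>
              intro hev
              have h1 : evalF σ a = true ∧ evalF σ b = true := by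
                simpa [evalF, Bool.and_eq_true] using hev
              simp only [Formula.repl, evalF, Bool.and_eq_true]
              exact ⟨iha q hq h1.1, h1.2⟩
          | true =>
              intro hev
              have h1 : evalF σ a = true ∧ evalF σ b = true := by
                simpa [evalF, Bool.and_eq_true] using hev
              simp only [Formula.repl, evalF, Bool.and_eq_true]
              exact ⟨h1.1, ihb q hq h1.2⟩

lemma stepSound {S : Set RuleName} {φ ψ : Formula} (h : Step S φ ψ) (σ : ℕ → Bool) :
    evalF σ φ = true → evalF σ ψ = true := by
  obtain ⟨r, _, q, γ, δ, h1, h2, h3⟩ := h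
  subst h3
  exact replMono (ruleSound h2 σ) φ q h1

lemma derivesSound {S : Set RuleName} {φ ψ : Formula} (h : Derives S φ ψ) (σ : ℕ → Bool) :
    evalF σ φ = true → evalF σ ψ = true := by
  induction h with
  | refl => exact id
  | tail _ hstep ih => exact fun h0 => stepSound hstep σ (ih h0)

/-! ### `hlo`/`hhi`: evaluation with all atoms false / true -/

def hlo : Formula → Bool
  | .tt => true
  | .ff => false
  | .atom _ _ => false
  | .or a b => hlo a || hlo b
  | .and a b => hlo a && hlo b

def hhi : Formula → Bool
  | .tt => true
  | .ff => false
  | .atom _ _ => true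
  | .or a b => hhi a || hhi b
  | .and a b => hhi a && hhi b

/-! ### Duality -/

def dual : Formula → Formula
  | .tt => .ff
  | .ff => .tt
  | .atom n b => .atom n (!b)
  | .or a b => .and (dual a) (dual b)
  | .and a b => .or (dual a) (dual b)

lemma eval_dual (σ : ℕ → Bool) (F : Formula) : evalF σ (dual F) = !evalF σ F := by
  induction F with
  | tt => rfl
  | ff => rfl
  | atom n b => simp [dual, evalF]; cases σ n <;> cases b <;> rfl
  | or a b iha ihb => simp [dual, evalF, iha, ihb]
  | and a b iha ihb => simp [dual, evalF, iha, ihb]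

lemma hlo_dual (F : Formula) : hlo (dual F) = !hhi F := by
  induction F with
  | tt => rfl
  | ff => rfl
  | atom n b => rfl
  | or a b iha ihb => simp [dual, hlo, hhi, iha, ihb]
  | and a b iha ihb => simp [dual, hlo, hhi, iha, ihb]

/-! ### Growing from units (down fragment) and collapsing to units (up fragment) -/

lemma grow (hE : EqClosed DSet) :
    ∀ δ : Formula, (hlo δ = true → Derives DSet .tt δ) ∧ (hlo δ = false → Derives DSet .ff δ) := by
  intro δ
  induction δ with
  | tt => exact ⟨fun _ => dRefl, by simp [hlo]⟩
  | ff => exact ⟨by simp [hlo], fun _ => dRefl⟩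
  | atom n b =>
      refine ⟨by simp [hlo], fun _ => ?_⟩
      exact dStep (Or.inr (Or.inl rfl)) (.awDown n b)
  | or a b iha ihb =>
      constructor
      · intro h
        rcases (by simpa [hlo, Bool.or_eq_true] using h : hlo a = true ∨ hlo b = true) with h1 | h1
        · cases hb : hlo b with
          | true => exact dTrans (eTTAdd hE) (dOr2 (iha.1 h1) (ihb.1 hb))
          | false => exact dTrans (eOrUnitAdd hE .tt) (dOr2 (iha.1 h1) (ihb.2 hb))
        · cases ha : hlo a with
          | true => exact dTrans (eTTAdd hE) (dOr2 (iha.1 ha) (ihb.1 h1))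
          | false => exact dTrans (eOrUnitAddL hE .tt) (dOr2 (iha.2 ha) (ihb.1 h1))
      · intro h
        have h1 : hlo a = false ∧ hlo b = false := by
          constructor <;> [cases ha : hlo a; cases hb : hlo b] <;> simp_all [hlo]
        exact dTrans (eOrUnitAdd hE .ff) (dOr2 (iha.2 h1.1) (ihb.2 h1.2))
  | and a b iha ihb =>
      constructor
      · intro h
        have h1 : hlo a = true ∧ hlo b = true := by
          constructor <;> [cases ha : hlo a; cases hb : hlo b] <;> simp_all [hlo]
        exact dTrans (eAndUnitAdd hE .tt) (dAnd2 (iha.1 h1.1) (ihb.1 h1.2))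
      · intro h
        rcases (by
          cases ha : hlo a <;> cases hb : hlo b <;> simp_all [hlo] :
          hlo a = false ∨ hlo b = false) with h1 | h1
        · cases hb : hlo b with
          | true => exact dTrans (eAndUnitAdd hE .ff) (dAnd2 (iha.2 h1) (ihb.1 hb))
          | false => exact dTrans (eFFAdd hE) (dAnd2 (iha.2 h1) (ihb.2 hb))
        · cases ha : hlo a with
          | true => exact dTrans (eAndUnitAddL hE .ff) (dAnd2 (iha.1 ha) (ihb.2 h1))
          | false => exact dTrans (eFFAdd hE) (dAnd2 (iha.2 ha) (ihb.2 h1))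

lemma growT {δ : Formula} (h : hlo δ = true) : Derives DSet .tt δ := (grow eqDSet δ).1 h
lemma growF {δ : Formula} (h : hlo δ = false) : Derives DSet .ff δ := (grow eqDSet δ).2 h

/-- In the up fragment, any formula collapses to its `hhi` value. -/
lemma collapseHi (hE : EqClosed USet) :
    ∀ α : Formula, Derives USet α (if hhi α then .tt else .ff) := by
  intro α
  induction α with
  | tt => exact dRefl
  | ff => exact dRefl
  | atom n b => simpa [hhi] using dStep (Or.inr (Or.inl rfl)) (RuleInstance.awUp n b)
  | or a b iha ihb =>
      refine dTrans (dOr2 iha ihb) ?_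
      cases ha : hhi a <;> cases hb : hhi b <;> simp [hhi, ha, hb]
      · exact eOrUnitDel hE .ff
      · exact eOrUnitDelL hE .tt
      · exact eOrUnitDel hE .tt
      · exact eTTDel hE
  | and a b iha ihb =>
      refine dTrans (dAnd2 iha ihb) ?_
      cases ha : hhi a <;> cases hb : hhi b <;> simp [hhi, ha, hb]
      · exact eFFDel hE
      · exact eAndUnitDel hE .ff
      · exact eAndUnitDelL hE .ff
      · exact eAndUnitDel hE .tt

end AF

namespace AF

/-! ### Mergeable representations (`NF`) -/

inductive NF : Formula → Formula → Prop
  | bot {F : Formula} : hlo F = false → NF .ff F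
  | top {F : Formula} : hlo F = true → NF .tt F
  | atom1 {n : ℕ} {b : Bool} : NF (.atom n b) (.atom n b)
  | atomS {Y : Formula} {n : ℕ} {b : Bool} :
      NF Y (.atom n b) → NF (.or Y (.atom n b)) (.atom n b)
  | or {Y₁ Y₂ A B : Formula} :
      hlo (.or A B) = false → NF Y₁ A → NF Y₂ B → NF (.or Y₁ Y₂) (.or A B)
  | and {Y₁ Y₂ A B : Formula} :
      hlo (.and A B) = false → NF Y₁ A → NF Y₂ B → NF (.and Y₁ Y₂) (.and A B)

lemma NF_h1 {Y F : Formula} (h : NF Y F) (h1 : hlo F = true) : Y = .tt := by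
  cases h <;> simp_all [hlo]

/-- Any `NF` form reduces to its formula in the down fragment. -/
lemma NFdown {Y F : Formula} (h : NF Y F) : Derives DSet Y F := by
  induction h with
  | bot h => exact growF h
  | top h => exact growT h
  | atom1 => exact dRefl
  | atomS h ih =>
      refine dTrans (dOrL ih) ?_
      exact dStep (Or.inr (Or.inr (Or.inl rfl))) (.acDown _ _)
  | or h h1 h2 ih1 ih2 => exact dOr2 ih1 ih2
  | and h h1 h2 ih1 ih2 => exact dAnd2 ih1 ih2

lemma nfMergeAtom {n : ℕ} {b : Bool} :
    ∀ (Z : Formula), NF Z (.atom n b) → ∀ (Y : Formula), NF Y (.atom n b) →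
    ∃ W, Derives MSet (.or Y Z) W ∧ NF W (.atom n b) := by
  intro Z
  induction Z with
  | ff => exact fun _ Y hY => ⟨Y, eOrUnitDel eqMSet Y, hY⟩
  | tt => intro hZ; cases hZ with | top h => simp [hlo] at h
  | atom m c =>
      intro hZ Y hY
      cases hZ with
      | atom1 => exact ⟨.or Y (.atom n b), dRefl, .atomS hY⟩
  | or Z₁ Z₂ ih₁ ih₂ =>
      intro hZ Y hY
      cases hZ with
      | atomS hZ' =>
          obtain ⟨W', d', n'⟩ := ih₁ hZ' Y hY
          exact ⟨.or W' (.atom n b), dTrans (eOrAssocR eqMSet _ _ _) (dOrL d'), .atomS n'⟩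
  | and Z₁ Z₂ ih₁ ih₂ => intro hZ; cases hZ

lemma nfMerge : ∀ (F : Formula) {Y Z : Formula}, NF Y F → NF Z F →
    ∃ W, Derives MSet (.or Y Z) W ∧ NF W F := by
  intro F
  induction F with
  | tt =>
      intro Y Z hY hZ
      have hY' := NF_h1 hY rfl
      have hZ' := NF_h1 hZ rfl
      subst hY'; subst hZ'
      exact ⟨.tt, eTTDel eqMSet, .top rfl⟩
  | ff =>
      intro Y Z hY hZ
      have hY' : Y = .ff := by cases hY <;> simp_all [hlo]
      have hZ' : Z = .ff := by cases hZ <;> simp_all [hlo]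
      subst hY'; subst hZ'
      exact ⟨.ff, eOrUnitDel eqMSet .ff, .bot rfl⟩
  | atom n b => exact fun {Y Z} hY hZ => nfMergeAtom Z hZ Y hY
  | or A B ihA ihB =>
      intro Y Z hY hZ
      cases hY with
      | bot h => exact ⟨Z, eOrUnitDelL eqMSet Z, hZ⟩
      | top h => exact ⟨.tt, by rw [NF_h1 hZ h]; exact eTTDel eqMSet, .top h⟩
      | or h hY1 hY2 =>
          cases hZ with
          | bot h' => exact ⟨_, eOrUnitDel eqMSet _, .or h hY1 hY2⟩
          | top h' => simp_all
          | or h3 hZ1 hZ2 =>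
              obtain ⟨W₁, d₁, n₁⟩ := ihA hY1 hZ1
              obtain ⟨W₂, d₂, n₂⟩ := ihB hY2 hZ2
              exact ⟨.or W₁ W₂, dTrans (eOrInterchange eqMSet _ _ _ _) (dOr2 d₁ d₂),
                .or h n₁ n₂⟩
  | and A B ihA ihB =>
      intro Y Z hY hZ
      cases hY with
      | bot h => exact ⟨Z, eOrUnitDelL eqMSet Z, hZ⟩
      | top h => exact ⟨.tt, by rw [NF_h1 hZ h]; exact eTTDel eqMSet, .top h⟩
      | and h hY1 hY2 =>
          cases hZ with
          | bot h' => exact ⟨_, eOrUnitDel eqMSet _, .and h hY1 hY2⟩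
          | top h' => simp_all
          | and h' hZ1 hZ2 =>
              obtain ⟨W₁, d₁, n₁⟩ := ihA hY1 hZ1
              obtain ⟨W₂, d₂, n₂⟩ := ihB hY2 hZ2
              refine ⟨.and W₁ W₂, ?_, .and h n₁ n₂⟩
              refine dTrans (dStep (Or.inr (Or.inl rfl)) (RuleInstance.m _ _ _ _)) ?_
              exact dAnd2 d₁ d₂

/-! ### Disjunction lists -/

def bigOr : List Formula → Formula
  | [] => .ff
  | x :: xs => .or x (bigOr xs)

def atomF (p : ℕ × Bool) : Formula := .atom p.1 p.2

lemma orPerm {S : Set RuleName} (hE : EqClosed S) :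
    ∀ {l₁ l₂ : List Formula}, l₁.Perm l₂ → Derives S (bigOr l₁) (bigOr l₂) := by
  intro l₁ l₂ h
  induction h with
  | nil => exact dRefl
  | cons x _ ih => exact dOrR ih
  | swap x y l =>
      refine dTrans (eOrAssocR hE _ _ _) ?_
      refine dTrans (dOrL (eOrComm hE _ _)) ?_
      exact eOrAssocL hE _ _ _
  | trans _ _ ih1 ih2 => exact dTrans ih1 ih2

lemma forall2Perm : ∀ {L L' : List Formula}, L.Perm L' → ∀ {ys : List Formula},
    List.Forall₂ NF ys L → ∃ ys', ys.Perm ys' ∧ List.Forall₂ NF ys' L' := by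
  intro L L' hp
  induction hp with
  | nil => exact fun h => ⟨[], by cases h; exact .refl _, by cases h; exact .nil⟩
  | cons x hp ih =>
      intro ys h
      cases h with
      | cons hx h' =>
          obtain ⟨ys', hperm, hf⟩ := ih h'
          exact ⟨_ :: ys', hperm.cons _, .cons hx hf⟩
  | swap x y l =>
      intro ys h
      cases h with
      | cons h1 h2 =>
        cases h2 with
        | cons h3 h4 => exact ⟨_, List.Perm.swap _ _ _, .cons h3 (.cons h1 h4)⟩
  | trans hp1 hp2 ih1 ih2 =>
      intro ys h
      obtain ⟨ys1, p1, f1⟩ := ih1 h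
      obtain ⟨ys2, p2, f2⟩ := ih2 f1
      exact ⟨ys2, p1.trans p2, f2⟩

lemma mergeList : ∀ {L ys zs : List Formula}, List.Forall₂ NF ys L → List.Forall₂ NF zs L →
    ∃ ws, Derives MSet (.or (bigOr ys) (bigOr zs)) (bigOr ws) ∧ List.Forall₂ NF ws L := by
  intro L ys zs h1 h2
  induction h1 generalizing zs with
  | nil =>
      cases h2
      exact ⟨[], eOrUnitDel eqMSet .ff, .nil⟩
  | @cons y F ys' L' hx h1' ih =>
      cases h2 with
      | cons hz h2' =>
          obtain ⟨w, dw, nw⟩ := nfMerge _ hx hz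
          obtain ⟨ws, dws, nws⟩ := ih h2'
          refine ⟨w :: ws, ?_, .cons nw nws⟩
          exact dTrans (eOrInterchange eqMSet _ _ _ _) (dOr2 dw dws)

/-! ### Padding with `f`'s, closing with `t` -/

lemma dffList {S : Set RuleName} (hE : EqClosed S) :
    ∀ (Γ : List (ℕ × Bool)), Derives S .ff (bigOr (Γ.map fun _ => Formula.ff)) := by
  intro Γ
  induction Γ with
  | nil => exact dRefl
  | cons q Γ' ih => exact dTrans (eOrUnitAddL hE .ff) (dOrR ih)

lemma forall2_ff : ∀ (Γ : List (ℕ × Bool)),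
    List.Forall₂ NF (Γ.map fun _ => Formula.ff) (Γ.map atomF) := by
  intro Γ
  induction Γ with
  | nil => exact .nil
  | cons q Γ' ih => exact .cons (.bot rfl) ih

lemma single : ∀ (Γ : List (ℕ × Bool)) (p : ℕ × Bool), p ∈ Γ →
    ∃ ys, Derives MSet (atomF p) (bigOr ys) ∧ List.Forall₂ NF ys (Γ.map atomF) := by
  intro Γ
  induction Γ with
  | nil => intro p hp; simp at hp
  | cons q Γ' ih =>
      intro p hp
      by_cases hq : q = p
      · subst hq
        refine ⟨atomF q :: Γ'.map (fun _ => Formula.ff), ?_, .cons ?_ (forall2_ff Γ')⟩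
        · exact dTrans (eOrUnitAdd eqMSet _) (dOrR (dffList eqMSet Γ'))
        · exact .atom1
      · have hp' : p ∈ Γ' := by
          rcases List.mem_cons.mp hp with h | h
          · exact absurd h.symm hq
          · exact h
        obtain ⟨ys', d', f'⟩ := ih p hp'
        exact ⟨.ff :: ys', dTrans d' (eOrUnitAddL eqMSet _), .cons (.bot rfl) f'⟩

lemma pairSeq : ∀ (Γ : List (ℕ × Bool)) (n : ℕ), (n, true) ∈ Γ → (n, false) ∈ Γ →
    ∃ ys, Derives MSet (.or (.atom n true) (.atom n false)) (bigOr ys) ∧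
      List.Forall₂ NF ys (Γ.map atomF) := by
  intro Γ
  induction Γ with
  | nil => intro n h; simp at h
  | cons q Γ' ih =>
      intro n h1 h2
      by_cases hq1 : q = (n, true)
      · have h2' : (n, false) ∈ Γ' := by
          rcases List.mem_cons.mp h2 with h | h
          · subst hq1; simp at h
          · exact h
        obtain ⟨ys', d', f'⟩ := single Γ' (n, false) h2'
        subst hq1
        exact ⟨.atom n true :: ys', dOrR d', .cons .atom1 f'⟩
      · by_cases hq2 : q = (n, false)
        · have h1' : (n, true) ∈ Γ' := by
            rcases List.mem_cons.mp h1 with h | h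
            · subst hq2; simp at h
            · exact h
          obtain ⟨ys', d', f'⟩ := single Γ' (n, true) h1'
          subst hq2
          exact ⟨.atom n false :: ys', dTrans (eOrComm eqMSet _ _) (dOrR d'), .cons .atom1 f'⟩
        · have h1' : (n, true) ∈ Γ' := by
            rcases List.mem_cons.mp h1 with h | h
            · exact absurd h.symm hq1
            · exact h
          have h2' : (n, false) ∈ Γ' := by
            rcases List.mem_cons.mp h2 with h | h
            · exact absurd h.symm hq2
            · exact h
          obtain ⟨ys', d', f'⟩ := ih n h1' h2'
          exact ⟨.ff :: ys', dTrans d' (eOrUnitAddL eqMSet _), .cons (.bot rfl) f'⟩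

def tfl (F : Formula) : Formula := if hlo F then .tt else .ff

lemma forall2_tfl : ∀ (L : List Formula), List.Forall₂ NF (L.map tfl) L := by
  intro L
  induction L with
  | nil => exact .nil
  | cons F L' ih =>
      refine .cons ?_ ih
      by_cases h : hlo F = true
      · simp only [tfl, h, if_true]; exact .top h
      · simp only [tfl, h, if_false]; exact .bot (by simp_all)

lemma tGrowCons {S : Set RuleName} (hE : EqClosed S) :
    ∀ (L : List Formula), Derives S .tt (.or .tt (bigOr (L.map tfl))) := by
  intro L
  induction L with
  | nil => exact eOrUnitAdd hE .tt
  | cons F L' ih =>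
      by_cases h : hlo F = true
      · have htf : tfl F = .tt := by simp [tfl, h]
        refine dTrans ih ?_
        refine dTrans (dOrL (eTTAdd hE)) ?_
        simp only [List.map_cons, bigOr, htf]
        exact eOrAssocL hE _ _ _
      · have htf : tfl F = .ff := by simp [tfl, h]
        refine dTrans ih ?_
        simp only [List.map_cons, bigOr, htf]
        exact dOrR (eOrUnitAddL hE _)

lemma tClose {S : Set RuleName} (hE : EqClosed S) :
    ∀ (L : List Formula) (F₀ : Formula), F₀ ∈ L → hlo F₀ = true →
      Derives S .tt (bigOr (L.map tfl)) := by
  intro L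
  induction L with
  | nil => intro F₀ h; simp at h
  | cons F L' ih =>
      intro F₀ hmem h0
      by_cases h : hlo F = true
      · have htf : tfl F = .tt := by simp [tfl, h]
        simpa only [List.map_cons, bigOr, htf] using tGrowCons hE L'
      · have htf : tfl F = .ff := by simp [tfl, h]
        have hmem' : F₀ ∈ L' := by
          rcases List.mem_cons.mp hmem with h' | h'
          · subst h'; simp_all
          · exact h'
        simp only [List.map_cons, bigOr, htf]
        exact dTrans (ih F₀ hmem' h0) (eOrUnitAddL hE _)

/-! ### Switch combinations -/

lemma switch2 {S : Set RuleName} (hE : EqClosed S) (hs : RuleName.s ∈ S) (a b c d : Formula) :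
    Derives S (.and (.and a b) (.or c d)) (.or (.and a c) (.and b d)) := by
  refine dTrans (eAndAssocL hE a b (.or c d)) ?_
  refine dTrans (dAndR (dTrans (dAndR (eOrComm hE c d)) (dStep hs (.s b d c)))) ?_
  refine dTrans (dAndR (eOrComm hE _ _)) ?_
  exact dStep hs (.s a c (.and b d))

lemma twoSwitch {S : Set RuleName} (hE : EqClosed S) (hs : RuleName.s ∈ S)
    (a b R₁ R₂ : Formula) :
    Derives S (.and (.or a R₁) (.or b R₂)) (.or (.and a b) (.or R₁ R₂)) := by
  refine dTrans (dStep hs (.s (.or a R₁) b R₂)) ?_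
  refine dTrans (dOrL (dTrans (eAndComm hE _ _) (dStep hs (.s b a R₁)))) ?_
  refine dTrans (dOrL (dOrL (eAndComm hE b a))) ?_
  exact eOrAssocL hE _ _ _

end AF

namespace AF

/-! ### The sequent construction -/

def msize : Formula → ℕ
  | .or a b => msize a + msize b + 1
  | .and a b => msize a + msize b + 1
  | _ => 1

def lsize : List Formula → ℕ
  | [] => 0
  | F :: Δ => msize F + lsize Δ

lemma msize_pos : ∀ F : Formula, 1 ≤ msize F := by
  intro F; cases F <;> simp [msize]

/-- Validity of the sequent `Γ, Δ`. -/
def SEQV (Γ : List (ℕ × Bool)) (Δ : List Formula) : Prop :=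
  ∀ σ : ℕ → Bool, (∀ p ∈ Γ, evalF σ (atomF p) = false) → ∃ F ∈ Δ, evalF σ F = true

lemma seqNil (Γ : List (ℕ × Bool)) (hv : SEQV Γ []) :
    ∃ X ys, Derives USet .tt X ∧ Derives MSet X (bigOr ys) ∧
      List.Forall₂ NF ys (Γ.map atomF) := by
  by_cases hpair : ∃ n, (n, true) ∈ Γ ∧ (n, false) ∈ Γ
  · obtain ⟨n, h1, h2⟩ := hpair
    obtain ⟨ys, d, f⟩ := pairSeq Γ n h1 h2
    exact ⟨.or (.atom n true) (.atom n false), ys,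
      dStep (Or.inl rfl) (RuleInstance.aiDown n true), d, f⟩
  · exfalso
    push_neg at hpair
    set σ : ℕ → Bool := fun m => ! (decide ((m, true) ∈ Γ)) with hσ
    have hfalse : ∀ p ∈ Γ, evalF σ (atomF p) = false := by
      rintro ⟨m, b⟩ hp
      cases b with
      | true =>
          have : decide ((m, true) ∈ Γ) = true := by simpa using hp
          simp [atomF, evalF, hσ, this]
      | false =>
          have hnot : (m, true) ∉ Γ := fun hmem => (hpair m hmem) hp
          have : decide ((m, true) ∈ Γ) = false := by simpa using hnot
          simp [atomF, evalF, hσ, this]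
    obtain ⟨F, hF, -⟩ := hv σ hfalse
    simp at hF

lemma seqThm : ∀ (N : ℕ) (Δ : List Formula) (Γ : List (ℕ × Bool)),
    lsize Δ ≤ N → SEQV Γ Δ →
    ∃ X ys, Derives USet .tt X ∧ Derives MSet X (bigOr ys) ∧
      List.Forall₂ NF ys (Δ ++ Γ.map atomF) := by
  intro N
  induction N with
  | zero =>
      intro Δ Γ hs hv
      have hΔ : Δ = [] := by
        cases Δ with
        | nil => rfl
        | cons F Δ' => exfalso; have := msize_pos F; simp [lsize] at hs; omega
      subst hΔ
      simpa using seqNil Γ hv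
  | succ N ih =>
      intro Δ Γ hs hv
      cases Δ with
      | nil => simpa using seqNil Γ hv
      | cons F Δ' =>
        by_cases hF : hlo F = true
        · -- close with t
          refine ⟨.tt, ((F :: Δ') ++ Γ.map atomF).map tfl, dRefl, ?_, forall2_tfl _⟩
          exact tClose eqMSet _ F (by simp) hF
        · cases F with
          | tt => simp [hlo] at hF
          | ff =>
              have hv' : SEQV Γ Δ' := by
                intro σ hσ
                obtain ⟨G, hG, hGt⟩ := hv σ hσ
                rcases List.mem_cons.mp hG with h | h
                · subst h; simp [evalF] at hGt
                · exact ⟨G, h, hGt⟩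
              have hs' : lsize Δ' ≤ N := by simp [lsize, msize] at hs; omega
              obtain ⟨X, ys, d1, d2, f⟩ := ih Δ' Γ hs' hv'
              refine ⟨X, .ff :: ys, d1, dTrans d2 (eOrUnitAddL eqMSet _), ?_⟩
              exact .cons (.bot rfl) f
          | atom n b =>
              have hv' : SEQV ((n, b) :: Γ) Δ' := by
                intro σ hσ
                have hσ' : ∀ p ∈ Γ, evalF σ (atomF p) = false :=
                  fun p hp => hσ p (List.mem_cons_of_mem _ hp)
                obtain ⟨G, hG, hGt⟩ := hv σ hσ'
                rcases List.mem_cons.mp hG with h | h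
                · subst h
                  have := hσ (n, b) List.mem_cons_self
                  simp [atomF] at this
                  rw [this] at hGt; cases hGt
                · exact ⟨G, h, hGt⟩
              have hs' : lsize Δ' ≤ N := by simp [lsize, msize] at hs; omega
              obtain ⟨X, ys, d1, d2, f⟩ := ih Δ' ((n, b) :: Γ) hs' hv'
              have hperm : List.Perm (Δ' ++ ((n, b) :: Γ).map atomF)
                  ((Formula.atom n b :: Δ') ++ Γ.map atomF) := by
                simp only [List.map_cons]
                exact List.perm_middle
              obtain ⟨ys', hp, f'⟩ := forall2Perm hperm f
              exact ⟨X, ys', d1, dTrans d2 (orPerm eqMSet hp), f'⟩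
          | or A B =>
              have hv' : SEQV Γ (A :: B :: Δ') := by
                intro σ hσ
                obtain ⟨G, hG, hGt⟩ := hv σ hσ
                rcases List.mem_cons.mp hG with h | h
                · subst h
                  rcases (by simpa [evalF, Bool.or_eq_true] using hGt :
                      evalF σ A = true ∨ evalF σ B = true) with h1 | h1
                  · exact ⟨A, by simp, h1⟩
                  · exact ⟨B, by simp, h1⟩
                · exact ⟨G, by simp [h], hGt⟩
              have hs' : lsize (A :: B :: Δ') ≤ N := by
                simp [lsize, msize] at hs ⊢; omega
              obtain ⟨X, ys, d1, d2, f⟩ := ih _ Γ hs' hv'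
              cases f with
              | cons hA f2 =>
                cases f2 with
                | cons hB frest =>
                    refine ⟨X, _ :: _, d1, dTrans d2 (eOrAssocR eqMSet _ _ _), ?_⟩
                    exact .cons (.or (Bool.not_eq_true _ ▸ eq_false_of_ne_true hF) hA hB) frest
          | and A B =>
              have hvA : SEQV Γ (A :: Δ') := by
                intro σ hσ
                obtain ⟨G, hG, hGt⟩ := hv σ hσ
                rcases List.mem_cons.mp hG with h | h
                · subst h
                  have : evalF σ A = true ∧ evalF σ B = true := by
                    simpa [evalF, Bool.and_eq_true] using hGt
                  exact ⟨A, by simp, this.1⟩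
                · exact ⟨G, by simp [h], hGt⟩
              have hvB : SEQV Γ (B :: Δ') := by
                intro σ hσ
                obtain ⟨G, hG, hGt⟩ := hv σ hσ
                rcases List.mem_cons.mp hG with h | h
                · subst h
                  have : evalF σ A = true ∧ evalF σ B = true := by
                    simpa [evalF, Bool.and_eq_true] using hGt
                  exact ⟨B, by simp, this.2⟩
                · exact ⟨G, by simp [h], hGt⟩
              have hsA : lsize (A :: Δ') ≤ N := by
                have := msize_pos B; simp [lsize, msize] at hs ⊢; omega
              have hsB : lsize (B :: Δ') ≤ N := by
                have := msize_pos A; simp [lsize, msize] at hs ⊢; omega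
              obtain ⟨X₁, ys₁, d1, d2, f1⟩ := ih _ Γ hsA hvA
              obtain ⟨X₂, ys₂, d1', d2', f2⟩ := ih _ Γ hsB hvB
              cases f1 with
              | cons hA fr1 =>
                cases f2 with
                | cons hB fr2 =>
                    obtain ⟨ws, dws, fws⟩ := mergeList fr1 fr2
                    refine ⟨.and X₁ X₂, _ :: ws, ?_, ?_, .cons (.and (Bool.not_eq_true _ ▸ eq_false_of_ne_true hF) hA hB) fws⟩
                    · exact dTrans (eAndUnitAdd eqUSet .tt) (dAnd2 d1 d1')
                    · refine dTrans (dAnd2 d2 d2') ?_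
                      refine dTrans (twoSwitch eqMSet (Or.inl rfl) _ _ _ _) ?_
                      exact dOrR dws

end AF

namespace AF

/-! ### The cut construction -/

lemma cutAtom (n : ℕ) (b : Bool) :
    ∀ (Y : Formula), NF Y (.atom n (!b)) →
    ∃ P Q, Derives USet (.atom n b) P ∧ Derives MSet (.and P Y) Q ∧ Derives DSet Q .ff := by
  intro Y
  induction Y with
  | ff =>
      intro _
      refine ⟨.tt, .ff, dStep (Or.inr (Or.inl rfl)) (.awUp n b), ?_, dRefl⟩
      exact eAndUnitDelL eqMSet .ff
  | tt => intro hY; cases hY with | top h => simp [hlo] at h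
  | atom m c =>
      intro hY
      cases hY with
      | atom1 =>
          exact ⟨.atom n b, .and (.atom n b) (.atom n (!b)), dRefl, dRefl,
            dStep (Or.inl rfl) (.aiUp n b)⟩
  | or Y₁ Y₂ ih₁ ih₂ =>
      intro hY
      cases hY with
      | atomS hY' =>
          obtain ⟨P', Q', u', m', d'⟩ := ih₁ hY'
          refine ⟨.and P' (.atom n b), .or Q' (.and (.atom n b) (.atom n (!b))), ?_, ?_, ?_⟩
          · exact dTrans (dStep (Or.inr (Or.inr (Or.inl rfl))) (.acUp n b)) (dAndL u')
          · exact dTrans (switch2 eqMSet (Or.inl rfl) P' (.atom n b) Y₁ (.atom n (!b)))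
              (dOrL m')
          · refine dTrans (dOrL d') ?_
            refine dTrans (dOrR (dStep (Or.inl rfl) (.aiUp n b))) ?_
            exact eOrUnitDel eqDSet .ff
  | and Y₁ Y₂ ih₁ ih₂ => intro hY; cases hY

lemma cutLemma : ∀ (A Y : Formula), NF Y (dual A) →
    ∃ P Q, Derives USet A P ∧ Derives MSet (.and P Y) Q ∧ Derives DSet Q .ff := by
  intro A
  induction A with
  | tt =>
      intro Y hY
      have hY' : Y = .ff := by
        simp only [dual] at hY
        cases hY <;> simp_all [hlo]
      subst hY'
      exact ⟨.tt, .ff, dRefl, eAndUnitDelL eqMSet .ff, dRefl⟩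
  | ff =>
      intro Y hY
      have hY'' : NF Y Formula.tt := by simpa [dual] using hY
      have hY' : Y = .tt := NF_h1 hY'' rfl
      subst hY'
      exact ⟨.ff, .ff, dRefl, eAndUnitDel eqMSet .ff, dRefl⟩
  | atom n b =>
      intro Y hY
      exact cutAtom n b Y (by simpa [dual] using hY)
  | or A₁ A₂ ih₁ ih₂ =>
      intro Y hY
      simp only [dual] at hY
      cases hY with
      | bot h =>
          refine ⟨if hhi (A₁.or A₂) then .tt else .ff, .ff, collapseHi eqUSet _, ?_, dRefl⟩
          by_cases h1 : hhi (A₁.or A₂) = true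
          · simp only [h1, if_true]
            exact eAndUnitDelL eqMSet .ff
          · simp only [h1, if_false]
            exact eFFDel eqMSet
      | top h =>
          have hh : hhi (A₁.or A₂) = false := by
            have h2 := hlo_dual (A₁.or A₂)
            simp only [dual] at h2
            rw [h] at h2
            simpa using h2.symm
          refine ⟨.ff, .ff, ?_, eAndUnitDel eqMSet .ff, dRefl⟩
          simpa [hh] using collapseHi eqUSet (A₁.or A₂)
      | and hz hY₁ hY₂ =>
          obtain ⟨P₁, Q₁, u₁, m₁, d₁⟩ := ih₁ _ hY₁
          obtain ⟨P₂, Q₂, u₂, m₂, d₂⟩ := ih₂ _ hY₂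
          refine ⟨.or P₁ P₂, .or Q₁ Q₂, dOr2 u₁ u₂, ?_, ?_⟩
          · refine dTrans (eAndComm eqMSet _ _) ?_
            refine dTrans (switch2 eqMSet (Or.inl rfl) _ _ _ _) ?_
            exact dOr2 (dTrans (eAndComm eqMSet _ _) m₁) (dTrans (eAndComm eqMSet _ _) m₂)
          · exact dTrans (dOr2 d₁ d₂) (eOrUnitDel eqDSet .ff)
  | and A₁ A₂ ih₁ ih₂ =>
      intro Y hY
      simp only [dual] at hY
      cases hY with
      | bot h =>
          refine ⟨if hhi (A₁.and A₂) then .tt else .ff, .ff, collapseHi eqUSet _, ?_, dRefl⟩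
          by_cases h1 : hhi (A₁.and A₂) = true
          · simp only [h1, if_true]
            exact eAndUnitDelL eqMSet .ff
          · simp only [h1, if_false]
            exact eFFDel eqMSet
      | top h =>
          have hh : hhi (A₁.and A₂) = false := by
            have h2 := hlo_dual (A₁.and A₂)
            simp only [dual] at h2
            rw [h] at h2
            simpa using h2.symm
          refine ⟨.ff, .ff, ?_, eAndUnitDel eqMSet .ff, dRefl⟩
          simpa [hh] using collapseHi eqUSet (A₁.and A₂)
      | or hz hY₁ hY₂ =>
          obtain ⟨P₁, Q₁, u₁, m₁, d₁⟩ := ih₁ _ hY₁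
          obtain ⟨P₂, Q₂, u₂, m₂, d₂⟩ := ih₂ _ hY₂
          refine ⟨.and P₁ P₂, .or Q₁ Q₂, dAnd2 u₁ u₂, ?_, ?_⟩
          · refine dTrans (switch2 eqMSet (Or.inl rfl) _ _ _ _) ?_
            exact dOr2 m₁ m₂
          · exact dTrans (dOr2 d₁ d₂) (eOrUnitDel eqDSet .ff)

end AF
namespace AF

/-- Decomposition: every SKS derivation from `α` to `β`
can be decomposed into a phase using only `ai↓`, `aw↑`, `ac↑` (and `=`),
followed by a linear phase using only `s`, `m` (and `=`), followed by a
phase using only `ai↑`, `aw↓`, `ac↓` (and `=`). -/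
theorem statement_19 (α β : Formula) (h : Derives Set.univ α β) :
    ∃ β' γ' : Formula,
      Derives {r | r = RuleName.aiDown ∨ r = RuleName.awUp ∨
                   r = RuleName.acUp ∨ r.isEq = true} α β' ∧
      Derives {r | r = RuleName.s ∨ r = RuleName.m ∨ r.isEq = true} β' γ' ∧
      Derives {r | r = RuleName.aiUp ∨ r = RuleName.awDown ∨
                   r = RuleName.acDown ∨ r.isEq = true} γ' β := by
  have hval : ∀ σ, evalF σ α = true → evalF σ β = true := fun σ => derivesSound h σ
  have hv : SEQV [] [dual α, β] := by
    intro σ _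
    by_cases hα : evalF σ α = true
    · exact ⟨β, by simp, hval σ hα⟩
    · refine ⟨dual α, by simp, ?_⟩
      rw [eval_dual]
      simp only [Bool.not_eq_true] at hα
      simp [hα]
  obtain ⟨X, ys, d1, d2, f⟩ := seqThm (lsize [dual α, β]) _ [] le_rfl hv
  cases f with
  | @cons Yd _ ys' _ hYd ftail =>
    cases ftail with
    | @cons Yβ _ ys'' _ hYβ fnil =>
      cases fnil
      obtain ⟨P, Q, u, mcut, dq⟩ := cutLemma α Yd hYd
      refine ⟨.and P X, .or Q Yβ, ?_, ?_, ?_⟩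
      · exact dTrans (eAndUnitAdd eqUSet α) (dAnd2 u d1)
      · refine dTrans (dAndR d2) ?_
        refine dTrans (dAndR (dOrR (eOrUnitDel eqMSet Yβ))) ?_
        refine dTrans (dStep (Or.inl rfl) (RuleInstance.s P Yd Yβ)) ?_
        exact dOrL mcut
      · refine dTrans (dOrL dq) ?_
        exact dTrans (eOrUnitDelL eqDSet Yβ) (NFdown hYβ)

end AF
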